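/- Let X be a complex Banach space, let P be an L-projection on X** with range i_X(X), and let Y be a closed subspace of X such that P maps Y^{⊥⊥} onto i_X(Y). Then the quotient X/Y is L-embedded: the canonical image of X/Y in (X/Y)** is the range of an L-projection on (X/Y)**. -/

import Mathlib

open NormedSpace

noncomputable section

set_option maxHeartbeats 1000000

/-- The transpose (dual map) of a continuous linear map between (semi)normed spaces:
`ctranspose f` sends a functional `g` to `g ∘ f`. -/
def ctranspose {E F : Type*} [SeminormedAddCommGroup E] [NormedSpace ℂ E]
    [SeminormedAddCommGroup F] [NormedSpace ℂ F] (f : E →L[ℂ] F) :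
    StrongDual ℂ F →L[ℂ] StrongDual ℂ E :=
  (ContinuousLinearMap.compL ℂ E F ℂ).flip f

/-- A bounded linear projection `P` is an L-projection if `‖z‖ = ‖P z‖ + ‖z - P z‖`
for all `z`. -/
def IsLProjection {Z : Type*} [SeminormedAddCommGroup Z] [NormedSpace ℂ Z]
    (P : Z →L[ℂ] Z) : Prop :=
  (∀ z, P (P z) = P z) ∧ ∀ z, ‖z‖ = ‖P z‖ + ‖z - P z‖

section Aux

variable {X : Type*} [NormedAddCommGroup X] [NormedSpace ℂ X] (Y : Subspace ℂ X)

/-- The quotient map as a continuous linear map. -/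
def quotCLM : X →L[ℂ] X ⧸ Y := ⟨Y.mkQ, Y.isOpenQuotientMap_mkQ.continuous⟩

lemma quotCLM_apply (x : X) : quotCLM Y x = Submodule.Quotient.mk x := rfl

/-- The dual map of the quotient map does not decrease norms. -/
lemma norm_le_norm_ctranspose_quot (g : StrongDual ℂ (X ⧸ Y)) :
    ‖g‖ ≤ ‖ctranspose (quotCLM Y) g‖ := by
  refine ContinuousLinearMap.opNorm_le_bound _ (norm_nonneg _) (fun q => ?_)
  refine le_of_forall_pos_le_add (fun ε hε => ?_)
  set C := ‖ctranspose (quotCLM Y) g‖ with hC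
  have hC0 : 0 ≤ C := norm_nonneg _
  have hδ : 0 < ε / (C + 1) := by positivity
  obtain ⟨m, hm, hmlt⟩ := Submodule.Quotient.norm_mk_lt q hδ
  have h1 : g q = (ctranspose (quotCLM Y) g) m := by
    rw [← hm]; rfl
  have h2 : ‖(ctranspose (quotCLM Y) g) m‖ ≤ C * ‖m‖ :=
    ContinuousLinearMap.le_opNorm _ m
  have h3 : C * ‖m‖ ≤ C * (‖q‖ + ε / (C + 1)) :=
    mul_le_mul_of_nonneg_left (le_of_lt hmlt) hC0
  have h4 : C * (ε / (C + 1)) ≤ ε := by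
    rw [mul_div_assoc']
    rw [div_le_iff₀ (by linarith : (0:ℝ) < C + 1)]
    nlinarith
  calc ‖g q‖ = ‖(ctranspose (quotCLM Y) g) m‖ := by rw [h1]
  _ ≤ C * ‖m‖ := h2
  _ ≤ C * ‖q‖ + C * (ε / (C + 1)) := by rw [mul_add] at h3; exact h3
  _ ≤ C * ‖q‖ + ε := by linarith

lemma norm_ctranspose_quot_le (g : StrongDual ℂ (X ⧸ Y)) :
    ‖ctranspose (quotCLM Y) g‖ ≤ ‖g‖ := by
  refine ContinuousLinearMap.opNorm_le_bound _ (norm_nonneg g) (fun x => ?_)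
  calc ‖ctranspose (quotCLM Y) g x‖ = ‖g (quotCLM Y x)‖ := rfl
  _ ≤ ‖g‖ * ‖quotCLM Y x‖ := ContinuousLinearMap.le_opNorm _ _
  _ ≤ ‖g‖ * ‖x‖ := mul_le_mul_of_nonneg_left
      (Submodule.Quotient.norm_mk_le Y x) (norm_nonneg g)

end Aux

/-- Let `P` be an L-projection on `X**` with range `i_X(X)` and let `Y` be a
closed subspace of `X` such that `P` maps `Y^{⊥⊥}` onto `i_X(Y)`. Then the quotient `X/Y` is
L-embedded: its canonical image in `(X/Y)**` is the range of an L-projection. -/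
theorem quotient_by_Lsubspace_is_Lembedded
    (X : Type*) [NormedAddCommGroup X] [NormedSpace ℂ X] [CompleteSpace X]
    (P : StrongDual ℂ (StrongDual ℂ X) →L[ℂ] StrongDual ℂ (StrongDual ℂ X))
    (hP : IsLProjection (Z := StrongDual ℂ (StrongDual ℂ X)) P)
    (hrange : Set.range P = Set.range (inclusionInDoubleDual ℂ X))
    (Y : Subspace ℂ X) [IsClosed (Y : Set X)]
    (hPY : P '' {Ψ : StrongDual ℂ (StrongDual ℂ X) | ∀ f : StrongDual ℂ X, (∀ y ∈ Y, f y = 0) → Ψ f = 0}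
        = inclusionInDoubleDual ℂ X '' (Y : Set X)) :
    ∃ Q : StrongDual ℂ (StrongDual ℂ (X ⧸ Y)) →L[ℂ] StrongDual ℂ (StrongDual ℂ (X ⧸ Y)),
      @IsLProjection _ (ContinuousLinearMap.toSeminormedAddCommGroup (E := StrongDual ℂ (X ⧸ Y))
        (F := ℂ) (σ₁₂ := RingHom.id ℂ)) (ContinuousLinearMap.toNormedSpace
        (E := StrongDual ℂ (X ⧸ Y)) (F := ℂ) (σ₁₂ := RingHom.id ℂ) (𝕜' := ℂ)) Q ∧
      Set.range Q = Set.range (inclusionInDoubleDual ℂ (X ⧸ Y)) := by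
  classical
  letI i1 : SeminormedAddCommGroup (StrongDual ℂ (StrongDual ℂ (X ⧸ Y))) :=
    ContinuousLinearMap.toSeminormedAddCommGroup (E := StrongDual ℂ (X ⧸ Y)) (F := ℂ)
      (σ₁₂ := RingHom.id ℂ)
  letI i2 : NormedSpace ℂ (StrongDual ℂ (StrongDual ℂ (X ⧸ Y))) :=
    ContinuousLinearMap.toNormedSpace (E := StrongDual ℂ (X ⧸ Y)) (F := ℂ)
      (σ₁₂ := RingHom.id ℂ) (𝕜' := ℂ)
  set π : X →L[ℂ] X ⧸ Y := quotCLM Y with hπdef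
  set j : StrongDual ℂ (X ⧸ Y) →L[ℂ] StrongDual ℂ X := ctranspose π with hjdef
  set T : StrongDual ℂ (StrongDual ℂ X) →L[ℂ] StrongDual ℂ (StrongDual ℂ (X ⧸ Y)) :=
    ctranspose (E := StrongDual ℂ (X ⧸ Y)) (F := StrongDual ℂ X) j with hTdef
  set ι := inclusionInDoubleDual ℂ X with hιdef
  set ιQ := inclusionInDoubleDual ℂ (X ⧸ Y) with hιQdef
  have hTapp : ∀ (Ψ : StrongDual ℂ (StrongDual ℂ X)) (g : StrongDual ℂ (X ⧸ Y)), T Ψ g = Ψ (j g) :=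
    fun _ _ => rfl
  have hjapp : ∀ (g : StrongDual ℂ (X ⧸ Y)) (x : X), j g x = g (π x) := fun _ _ => rfl
  -- T does not increase norms
  have hTnorm : ∀ Ψ, ‖T Ψ‖ ≤ ‖Ψ‖ := by
    intro Ψ
    refine ContinuousLinearMap.opNorm_le_bound _ (ContinuousLinearMap.opNorm_nonneg _) (fun g => ?_)
    calc ‖T Ψ g‖ = ‖Ψ (j g)‖ := rfl
    _ ≤ ‖Ψ‖ * ‖j g‖ := ContinuousLinearMap.le_opNorm _ _
    _ ≤ ‖Ψ‖ * ‖g‖ := mul_le_mul_of_nonneg_left (norm_ctranspose_quot_le Y g) (ContinuousLinearMap.opNorm_nonneg _)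
  -- commutation : T ∘ ι = ιQ ∘ π
  have hcomm : ∀ x : X, T (ι x) = ιQ (π x) := by
    intro x
    ext g
    calc T (ι x) g = (ι x) (j g) := rfl
    _ = j g x := dual_def ℂ X x (j g)
    _ = g (π x) := rfl
    _ = ιQ (π x) g := (dual_def ℂ (X ⧸ Y) (π x) g).symm
  -- j is injective
  have hjinj : Function.Injective j := by
    intro g₁ g₂ h
    have := norm_le_norm_ctranspose_quot Y (g₁ - g₂)
    rw [map_sub] at this
    rw [show (j g₁ : StrongDual ℂ X) - j g₂ = 0 by rw [h]; simp, norm_zero] at this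
    have : ‖g₁ - g₂‖ = 0 := le_antisymm this (norm_nonneg (g₁ - g₂))
    rwa [ContinuousLinearMap.opNorm_zero_iff, sub_eq_zero] at this
  -- norm-controlled lifting along T, via Hahn-Banach
  have hlift : ∀ Φ : StrongDual ℂ (StrongDual ℂ (X ⧸ Y)), ∃ Ψ, T Ψ = Φ ∧ ‖Ψ‖ ≤ ‖Φ‖ := by
    intro Φ
    set p : Subspace ℂ (StrongDual ℂ X) := LinearMap.range (j : StrongDual ℂ (X ⧸ Y) →ₗ[ℂ] StrongDual ℂ X)
      with hpdef
    have hjinj' : Function.Injective (j : StrongDual ℂ (X ⧸ Y) →ₗ[ℂ] StrongDual ℂ X) := hjinj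
    set e := LinearEquiv.ofInjective (j : StrongDual ℂ (X ⧸ Y) →ₗ[ℂ] StrongDual ℂ X) hjinj' with hedef
    have he : ∀ g, ((e g : p) : StrongDual ℂ X) = j g := fun g => rfl
    have hesymm : ∀ x : p, j (e.symm x) = (x : StrongDual ℂ X) := by
      intro x
      conv_rhs => rw [← e.apply_symm_apply x]
      exact (he _)
    set f₀ : p →ₗ[ℂ] ℂ := Φ.toLinearMap.comp e.symm.toLinearMap with hf₀def
    have hf₀bound : ∀ x : p, ‖f₀ x‖ ≤ ‖Φ‖ * ‖x‖ := by
      intro x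
      calc ‖f₀ x‖ = ‖Φ (e.symm x)‖ := rfl
      _ ≤ ‖Φ‖ * ‖e.symm x‖ := ContinuousLinearMap.le_opNorm (E := StrongDual ℂ (X ⧸ Y)) (F := ℂ)
          (σ₁₂ := RingHom.id ℂ) Φ (e.symm x)
      _ ≤ ‖Φ‖ * ‖j (e.symm x)‖ := mul_le_mul_of_nonneg_left
          (norm_le_norm_ctranspose_quot Y _) (norm_nonneg _)
      _ = ‖Φ‖ * ‖x‖ := by rw [hesymm]; rfl
    set f : p →L[ℂ] ℂ := LinearMap.mkContinuous (E := p) (F := ℂ) (σ := RingHom.id ℂ) f₀ ‖Φ‖ hf₀bound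
      with hfdef
    obtain ⟨Ψ, hΨext, hΨnorm⟩ := exists_extension_norm_eq p f
    refine ⟨Ψ, ?_, ?_⟩
    · ext g
      have hmem : j g ∈ p := ⟨g, rfl⟩
      calc T Ψ g = Ψ (j g) := rfl
      _ = f ⟨j g, hmem⟩ := hΨext ⟨j g, hmem⟩
      _ = Φ (e.symm ⟨j g, hmem⟩) := rfl
      _ = Φ g := by
          congr 1
          have : (⟨j g, hmem⟩ : p) = e g := by
            apply Subtype.ext; exact (he g).symm
          rw [this, e.symm_apply_apply]
    · rw [hΨnorm]
      have h0 : 0 ≤ ‖Φ‖ := norm_nonneg _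
      refine ContinuousLinearMap.opNorm_le_bound _ h0 (fun x => ?_)
      exact hf₀bound x
  -- the kernel of T is stable under P (up to killing by T)
  have hkerstab : ∀ Ψ, T Ψ = 0 → T (P Ψ) = 0 := by
    intro Ψ hΨ
    have hmem : Ψ ∈ {Ψ : StrongDual ℂ (StrongDual ℂ X) | ∀ f : StrongDual ℂ X, (∀ y ∈ Y, f y = 0) → Ψ f = 0} := by
      intro f hf
      -- f factors through the quotient
      have hle : Y ≤ LinearMap.ker (f : X →ₗ[ℂ] ℂ) := fun y hy => hf y hy
      set g₀ : (X ⧸ Y) →ₗ[ℂ] ℂ := Y.liftQ (f : X →ₗ[ℂ] ℂ) hle with hg₀def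
      have hg₀cont : Continuous g₀ := by
        rw [← Y.isOpenQuotientMap_mkQ.continuous_comp_iff]
        have : (g₀ ∘ Y.mkQ) = f := by
          ext x; simp [hg₀def]
        rw [this]
        exact f.continuous
      set g : StrongDual ℂ (X ⧸ Y) := ⟨g₀, hg₀cont⟩ with hgdef
      have hjg : j g = f := by
        ext x; rfl
      have := congrArg (fun Θ : StrongDual ℂ (StrongDual ℂ (X ⧸ Y)) => Θ g) hΨ
      simpa [hTapp, hjg] using this
    have : P Ψ ∈ ι '' (Y : Set X) := by
      rw [← hPY]; exact ⟨Ψ, hmem, rfl⟩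
    obtain ⟨y, hy, hPΨ⟩ := this
    rw [← hPΨ, hcomm y]
    have : π y = 0 := (Submodule.Quotient.mk_eq_zero Y).2 hy
    rw [this, map_zero]
  have hwd : ∀ Ψ Ψ', T Ψ = T Ψ' → T (P Ψ) = T (P Ψ') := by
    intro Ψ Ψ' h
    have h0 : T (Ψ - Ψ') = 0 := by rw [map_sub T, h, sub_self]
    have := hkerstab (Ψ - Ψ') h0
    rw [map_sub P, map_sub T, sub_eq_zero] at this
    exact this
  -- P does not increase norms and fixes its range
  have hPnorm : ∀ Ψ, ‖P Ψ‖ ≤ ‖Ψ‖ := by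
    intro Ψ
    have := hP.2 Ψ
    have h2 : 0 ≤ ‖Ψ - P Ψ‖ := norm_nonneg (Ψ - P Ψ)
    linarith
  have hPfix : ∀ x : X, P (ι x) = ι x := by
    intro x
    have : ι x ∈ Set.range P := by rw [hrange]; exact ⟨x, rfl⟩
    obtain ⟨w, hw⟩ := this
    rw [← hw, hP.1]
  -- the chosen lift
  set L : StrongDual ℂ (StrongDual ℂ (X ⧸ Y)) → StrongDual ℂ (StrongDual ℂ X) := fun Φ => (hlift Φ).choose with hLdef
  have hL1 : ∀ Φ, T (L Φ) = Φ := fun Φ => (hlift Φ).choose_spec.1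
  have hL2 : ∀ Φ, ‖L Φ‖ ≤ ‖Φ‖ := fun Φ => (hlift Φ).choose_spec.2
  -- the induced projection
  set Q₀ : StrongDual ℂ (StrongDual ℂ (X ⧸ Y)) →ₗ[ℂ] StrongDual ℂ (StrongDual ℂ (X ⧸ Y)) :=
    { toFun := fun Φ => T (P (L Φ)),
      map_add' := by
        intro Φ₁ Φ₂
        have h : T (L (Φ₁ + Φ₂)) = T (L Φ₁ + L Φ₂) := by
          rw [hL1, map_add, hL1, hL1]
        have h2 := hwd _ _ h
        rw [h2, map_add P, map_add T]
      map_smul' := by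
        intro c Φ
        have h : T (L (c • Φ)) = T (c • L Φ) := by
          rw [hL1, map_smul, hL1]
        have h2 := hwd _ _ h
        rw [h2, map_smul P, map_smul T, RingHom.id_apply] } with hQ₀def
  have hQ₀app : ∀ Φ, Q₀ Φ = T (P (L Φ)) := fun _ => rfl
  have hQ₀bound : ∀ Φ, ‖Q₀ Φ‖ ≤ 1 * ‖Φ‖ := by
    intro Φ
    rw [one_mul, hQ₀app]
    calc ‖T (P (L Φ))‖ ≤ ‖P (L Φ)‖ := hTnorm _
    _ ≤ ‖L Φ‖ := hPnorm _
    _ ≤ ‖Φ‖ := hL2 Φ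
  set Q : StrongDual ℂ (StrongDual ℂ (X ⧸ Y)) →L[ℂ] StrongDual ℂ (StrongDual ℂ (X ⧸ Y)) :=
    LinearMap.mkContinuous Q₀ 1 hQ₀bound with hQdef
  have hQapp : ∀ Φ, Q Φ = T (P (L Φ)) := fun _ => rfl
  refine ⟨Q, ⟨?_, ?_⟩, ?_⟩
  · -- idempotence
    intro Φ
    have h : T (L (Q Φ)) = T (P (L Φ)) := by rw [hL1, hQapp]
    have h2 := hwd _ _ h
    calc Q (Q Φ) = T (P (L (Q Φ))) := hQapp _
    _ = T (P (P (L Φ))) := h2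
    _ = T (P (L Φ)) := by rw [hP.1]
    _ = Q Φ := (hQapp _).symm
  · -- L-norm property
    intro Φ
    refine le_antisymm ?_ ?_
    · calc ‖Φ‖ = ‖Q Φ + (Φ - Q Φ)‖ := by rw [add_sub_cancel]
      _ ≤ ‖Q Φ‖ + ‖Φ - Q Φ‖ := norm_add_le _ _
    · have h1 : Q Φ = T (P (L Φ)) := hQapp Φ
      have h2 : Φ - T (P (L Φ)) = T (L Φ - P (L Φ)) := by
        rw [map_sub T, hL1]
      calc ‖Q Φ‖ + ‖Φ - Q Φ‖ = ‖T (P (L Φ))‖ + ‖T (L Φ - P (L Φ))‖ := by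
            rw [h1, h2]
      _ ≤ ‖P (L Φ)‖ + ‖L Φ - P (L Φ)‖ := add_le_add (hTnorm _) (hTnorm _)
      _ = ‖L Φ‖ := (hP.2 (L Φ)).symm
      _ ≤ ‖Φ‖ := hL2 Φ
  · -- range identification
    ext Φ
    constructor
    · rintro ⟨Φ', rfl⟩
      rw [hQapp]
      have : P (L Φ') ∈ Set.range ι := by rw [← hrange]; exact ⟨L Φ', rfl⟩
      obtain ⟨x, hx⟩ := this
      rw [← hx, hcomm]
      exact ⟨π x, rfl⟩
    · rintro ⟨q, rfl⟩
      obtain ⟨x, rfl⟩ := Submodule.Quotient.mk_surjective Y q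
      have hq : (Submodule.Quotient.mk x : X ⧸ Y) = π x := rfl
      refine ⟨ιQ (π x), ?_⟩
      rw [hq]
      rw [hQapp]
      have h : T (L (ιQ (π x))) = T (ι x) := by rw [hL1, hcomm]
      have := hwd _ _ h
      rw [this, hPfix, hcomm]
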